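/- Let X be an infinite-dimensional Fréchet space without continuous norm with increasing seminorms (p_n), Y a separable topological vector space with increasing seminorms (q_j), and (T_n) a sequence of continuous linear operators from X to Y. If there exist an increasing sequence (n_k) of positive integers and a set X_0 ⊂ X such that (1) for every j ≥ 1 and x ∈ X_0 the sequence (q_j(T_{n_k} x))_k is ultimately zero, and (2) for all n, K ≥ 1 the set ⋃_{k≥K} T_{n_k}(X_0 ∩ ker p_n) is dense in Y, then there exists a closed infinite-dimensional subspace M of X such that every non-zero vector of M is hypercyclic for (T_n) and M ∩ ker p has infinite dimension for every continuous seminorm p on X. -/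

import Mathlib

open Filter Topology



section Helpers

variable {𝕜 X : Type*} [NormedField 𝕜] [AddCommGroup X] [Module 𝕜 X]

theorem seminorm_add_null (p : Seminorm 𝕜 X) {x y : X} (h : p y = 0) : p (x + y) = p x := by
  refine le_antisymm ((map_add_le_add p x y).trans (by rw [h, add_zero])) ?_
  have : p x ≤ p (x + y) + p (-y) := by
    simpa using map_add_le_add p (x + y) (-y)
  simpa [map_neg_eq_map, h] using this

theorem seminorm_sub_null (p : Seminorm 𝕜 X) {x y : X} (h : p y = 0) : p (x - y) = p x := by
  rw [sub_eq_add_neg]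
  exact seminorm_add_null p (by simpa [map_neg_eq_map] using h)

theorem seminorm_sum_le (p : Seminorm 𝕜 X) {ι : Type*} (s : Finset ι) (f : ι → X) :
    p (∑ i ∈ s, f i) ≤ ∑ i ∈ s, p (f i) := by
  classical
  induction s using Finset.induction_on with
  | empty => simp
  | insert _ _ h ih =>
    rw [Finset.sum_insert h, Finset.sum_insert h]
    exact (map_add_le_add p _ _).trans (add_le_add_right ih _)

theorem seminorm_sum_null (p : Seminorm 𝕜 X) {ι : Type*} (s : Finset ι) (f : ι → X)
    (h : ∀ i ∈ s, p (f i) = 0) : p (∑ i ∈ s, f i) = 0 := by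
  refine le_antisymm ?_ (apply_nonneg _ _)
  calc p (∑ i ∈ s, f i) ≤ ∑ i ∈ s, p (f i) := seminorm_sum_le p s f
    _ = 0 := Finset.sum_eq_zero h

/-- Value of a continuous nonnegative-type function at a limit of points where it vanishes. -/
theorem null_of_tendsto {α : Type*} [TopologicalSpace α] {f : α → ℝ} (hf : Continuous f)
    {z : ℕ → α} {x : α} (hz : Tendsto z atTop (𝓝 x)) (h0 : ∀ᶠ N in atTop, f (z N) = 0) :
    f x = 0 := by
  have h1 : Tendsto (fun N => f (z N)) atTop (𝓝 (f x)) := (hf.tendsto x).comp hz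
  have h2 : Tendsto (fun N => f (z N)) atTop (𝓝 (0 : ℝ)) :=
    Tendsto.congr' (by filter_upwards [h0] with N hN using hN.symm) tendsto_const_nhds
  exact tendsto_nhds_unique h1 h2

/-- Graded linear independence: if each `e s` has nonzero seminorm at level `ℓ s` while all
later vectors vanish there, the family is linearly independent. -/
theorem graded_linearIndependent (p : ℕ → Seminorm 𝕜 X) (e : ℕ → X) (ℓ : ℕ → ℕ)
    (h1 : ∀ s, p (ℓ s) (e s) ≠ 0) (h2 : ∀ s i, s < i → p (ℓ s) (e i) = 0) :
    LinearIndependent 𝕜 e := by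
  rw [linearIndependent_iff']
  intro F g hg i hi
  by_contra hne
  -- consider the least index with nonzero coefficient
  have hex : ∃ j ∈ F, g j ≠ 0 := ⟨i, hi, hne⟩
  classical
  let S := F.filter fun j => g j ≠ 0
  have hSne : S.Nonempty := ⟨i, Finset.mem_filter.2 ⟨hi, hne⟩⟩
  set s := S.min' hSne with hs
  have hsS : s ∈ S := S.min'_mem hSne
  have hsF : s ∈ F := (Finset.mem_filter.1 hsS).1
  have hgs : g s ≠ 0 := (Finset.mem_filter.1 hsS).2
  have key : p (ℓ s) (∑ j ∈ F, g j • e j) = p (ℓ s) (g s • e s) := by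
    have : ∑ j ∈ F, g j • e j = g s • e s + ∑ j ∈ F.erase s, g j • e j :=
      (Finset.add_sum_erase F (fun j => g j • e j) hsF).symm
    rw [this, seminorm_add_null]
    refine seminorm_sum_null _ _ _ fun j hj => ?_
    rcases eq_or_ne (g j) 0 with h | h
    · simp [h]
    · have hjF : j ∈ F := Finset.mem_of_mem_erase hj
      have hjS : j ∈ S := Finset.mem_filter.2 ⟨hjF, h⟩
      have : s < j := lt_of_le_of_ne (S.min'_le j hjS) (Ne.symm (Finset.ne_of_mem_erase hj))
      rw [map_smul_eq_mul, h2 s j this, mul_zero]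
  rw [hg, map_zero] at key
  have : p (ℓ s) (g s • e s) = ‖g s‖ * p (ℓ s) (e s) := map_smul_eq_mul _ _ _
  rw [this] at key
  exact h1 s (by
    rcases mul_eq_zero.1 key.symm with h | h
    · exact absurd (norm_eq_zero.1 h) hgs
    · exact h)

end Helpers


theorem exists_tendsto_partialSum {𝕜 X : Type*} [NormedField 𝕜] [AddCommGroup X] [Module 𝕜 X]
    [UniformSpace X] [IsUniformAddGroup X] [CompleteSpace X]
    (p : ℕ → Seminorm 𝕜 X) (hp : WithSeminorms p)
    (hmono : ∀ i j : ℕ, i ≤ j → p i ≤ p j)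
    (w : ℕ → X) (hw : ∀ m t : ℕ, m ≤ t → p m (w t) = 0) :
    ∃ x : X, Tendsto (fun N => ∑ t ∈ Finset.range N, w t) atTop (𝓝 x) ∧
      ∀ m N : ℕ, (∀ t, N ≤ t → p m (w t) = 0) →
        p m (x - ∑ t ∈ Finset.range N, w t) = 0 := by
  classical
  set S : ℕ → X := fun N => ∑ t ∈ Finset.range N, w t with hS
  have hdiff : ∀ m k l : ℕ, m ≤ k → m ≤ l → p m (S l - S k) = 0 := by
    have aux : ∀ m k l : ℕ, m ≤ k → k ≤ l → p m (S l - S k) = 0 := by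
      intro m k l hmk hkl
      rw [hS]
      simp only
      rw [← Finset.sum_Ico_eq_sub _ hkl]
      exact seminorm_sum_null _ _ _ fun t ht =>
        hw m t (hmk.trans (Finset.mem_Ico.1 ht).1)
    intro m k l hmk hml
    rcases le_total k l with h | h
    · exact aux m k l hmk h
    · rw [← map_neg_eq_map (p m), neg_sub]
      exact aux m l k hml h
  have hcauchy : CauchySeq S := by
    rw [cauchySeq_iff]
    intro V hV
    rw [uniformity_eq_comap_nhds_zero X, mem_comap] at hV
    obtain ⟨U, hU, hUV⟩ := hV
    rcases hp.hasBasis_zero_ball.mem_iff.1 hU with ⟨⟨F, ε⟩, hε, hball⟩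
    set m := F.sup id with hm
    refine ⟨m, fun k hk l hl => ?_⟩
    apply hUV
    refine Set.mem_preimage.2 (hball ?_)
    have hle : F.sup p ≤ p m := Finset.sup_le fun i hi => hmono i m (Finset.le_sup (f := id) hi)
    rw [Seminorm.mem_ball_zero]
    calc (F.sup p) (S l - S k) ≤ p m (S l - S k) := hle _
      _ = 0 := hdiff m k l hk hl
      _ < ε := hε
  obtain ⟨x, hx⟩ := cauchySeq_tendsto_of_complete hcauchy
  refine ⟨x, hx, fun m N hmN => ?_⟩
  have hcont : Continuous fun z : X => p m (z - S N) :=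
    (hp.continuous_seminorm m).comp (continuous_id.sub continuous_const)
  refine null_of_tendsto hcont hx ?_
  filter_upwards [eventually_ge_atTop N] with M hM
  show p m (S M - S N) = 0
  rw [hS]
  simp only
  rw [← Finset.sum_Ico_eq_sub _ hM]
  exact seminorm_sum_null _ _ _ fun t ht => hmN t (Finset.mem_Ico.1 ht).1

/-- The kernel of a seminorm, as a submodule. -/
def Seminorm.kerSubmodule {𝕜 X : Type*} [NormedField 𝕜] [AddCommGroup X] [Module 𝕜 X]
    (p : Seminorm 𝕜 X) : Submodule 𝕜 X where
  carrier := {x | p x = 0}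
  zero_mem' := map_zero p
  add_mem' := by
    intro a b ha hb
    simp only [Set.mem_setOf_eq] at *
    exact le_antisymm (by simpa [ha, hb] using map_add_le_add p a b) (apply_nonneg p _)
  smul_mem' := by
    intro c x hx
    simp only [Set.mem_setOf_eq] at *
    simp [map_smul_eq_mul, hx]
theorem Seminorm.mem_kerSubmodule_iff {𝕜 X : Type*} [NormedField 𝕜] [AddCommGroup X]
    [Module 𝕜 X] (p : Seminorm 𝕜 X) {x : X} : x ∈ p.kerSubmodule ↔ p x = 0 := Iff.rfl

set_option maxHeartbeats 4000000 in
/-- Criterion for hypercyclic subspaces of type 2: if `X` is an infinite-dimensional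
Fréchet space without continuous norm and the sequence `(T n)` of operators into a
separable topological vector space `Y` satisfies the two conditions below along `(n k)`,
then there is a closed infinite-dimensional subspace of hypercyclic vectors (plus 0)
meeting the kernel of every continuous seminorm in an infinite-dimensional subspace. -/
theorem hypercyclic_subspace_type2_criterion {𝕜 X Y : Type*} [RCLike 𝕜]
    [AddCommGroup X] [Module 𝕜 X] [UniformSpace X] [IsUniformAddGroup X]
    [ContinuousSMul 𝕜 X] [CompleteSpace X] [T2Space X]
    [AddCommGroup Y] [Module 𝕜 Y] [TopologicalSpace Y] [IsTopologicalAddGroup Y]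
    [ContinuousSMul 𝕜 Y] [TopologicalSpace.SeparableSpace Y]
    (p : ℕ → Seminorm 𝕜 X) (hp : WithSeminorms p) (hpm : ∀ n, p n ≤ p (n + 1))
    (hXinf : ¬ Module.Finite 𝕜 X)
    (hnonorm : ¬ ∃ q : Seminorm 𝕜 X, Continuous q ∧ ∀ x : X, x ≠ 0 → q x ≠ 0)
    (q : ℕ → Seminorm 𝕜 Y) (hq : WithSeminorms q) (hqm : ∀ j, q j ≤ q (j + 1))
    (T : ℕ → X →L[𝕜] Y)
    (nk : ℕ → ℕ) (hnk : StrictMono nk) (X0 : Set X)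
    (h1 : ∀ j : ℕ, ∀ x ∈ X0, ∀ᶠ k in Filter.atTop, q j (T (nk k) x) = 0)
    (h2 : ∀ n K : ℕ, Dense (⋃ k ≥ K, T (nk k) '' (X0 ∩ ((p n).kerSubmodule : Set X)))) :
    ∃ M : Submodule 𝕜 X, IsClosed (M : Set X) ∧ ¬ Module.Finite 𝕜 M ∧
      (∀ x ∈ M, x ≠ 0 → Dense (Set.range fun n => T n x)) ∧
      (∀ r : Seminorm 𝕜 X, Continuous r → ¬ Module.Finite 𝕜 ↥(M ⊓ r.kerSubmodule)) := by
  classical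
  -- monotonicity of the seminorm families
  have hpmono : ∀ i j : ℕ, i ≤ j → p i ≤ p j := fun i j h => monotone_nat_of_le_succ hpm h
  have hqmono : ∀ i j : ℕ, i ≤ j → q i ≤ q j := fun i j h => monotone_nat_of_le_succ hqm h
  have hpcont : ∀ m, Continuous (p m) := fun m => hp.continuous_seminorm m
  have hqcont : ∀ j, Continuous (q j) := fun j => hq.continuous_seminorm j
  have hpsep : ∀ x : X, x ≠ 0 → ∃ m, p m x ≠ 0 := fun x hx => hp.separating_of_T1 x hx
  -- continuous seminorms on X are dominated by a single p N
  have hbound : ∀ r : Seminorm 𝕜 X, Continuous r →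
      ∃ N : ℕ, ∃ C : ℝ, 0 ≤ C ∧ ∀ x, r x ≤ C * p N x := by
    intro r hr
    obtain ⟨F, C, hC, hle⟩ := Seminorm.bound_of_continuous hp r hr
    refine ⟨F.sup id, C, C.coe_nonneg, fun x => ?_⟩
    calc r x ≤ (C • F.sup p) x := hle x
      _ = (C : ℝ) * (F.sup p) x := rfl
      _ ≤ (C : ℝ) * p (F.sup id) x := by
          refine mul_le_mul_of_nonneg_left ?_ C.coe_nonneg
          exact (Finset.sup_le fun i hi => hpmono i _ (Finset.le_sup (f := id) hi)) x
  have hker_r : ∀ r : Seminorm 𝕜 X, Continuous r → ∃ N : ℕ, ∀ x, p N x = 0 → r x = 0 := by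
    intro r hr
    obtain ⟨N, C, hC, hCb⟩ := hbound r hr
    exact ⟨N, fun x hx => le_antisymm (by simpa [hx] using hCb x) (apply_nonneg r x)⟩
  -- neighborhoods in Y contain single-seminorm balls
  have hqball : ∀ (y : Y) (U : Set Y), U ∈ 𝓝 y →
      ∃ j : ℕ, ∃ ε : ℝ, 0 < ε ∧ ∀ z, q j (z - y) < ε → z ∈ U := by
    intro y U hU
    obtain ⟨F, ε, hε, hsub⟩ := (hq.mem_nhds_iff y U).1 hU
    refine ⟨F.sup id, ε, hε, fun z hz => ?_⟩
    refine hsub ?_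
    rw [Seminorm.mem_ball]
    calc (F.sup q) (z - y) ≤ q (F.sup id) (z - y) :=
          (Finset.sup_le fun i hi => hqmono i _ (Finset.le_sup (f := id) hi)) _
      _ < ε := hz
  -- a submodule containing an infinite independent family is not finite dimensional
  have hnotfin : ∀ (M : Submodule 𝕜 X) (f : ℕ → X), LinearIndependent 𝕜 f →
      (∀ i, f i ∈ M) → ¬ Module.Finite 𝕜 M := by
    intro M f hf hmem hfin
    have hg : LinearIndependent 𝕜 fun i => (⟨f i, hmem i⟩ : M) := by
      refine LinearIndependent.of_comp M.subtype ?_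
      exact hf
    haveI := hfin
    exact (not_finite_iff_infinite.2 inferInstance) hg.finite
  have hnull_le : ∀ (m m' : ℕ) (x : X), m ≤ m' → p m' x = 0 → p m x = 0 := by
    intro m m' x h h0
    exact le_antisymm (by simpa [h0] using hpmono m m' h x) (apply_nonneg _ _)
  by_cases hdeg : ∃ (j : ℕ) (y : Y), q j y ≠ 0
  case neg =>
    -- degenerate case: the topology of Y is trivial, every nonempty set is dense
    push_neg at hdeg
    have hdense : ∀ S : Set Y, S.Nonempty → Dense S := by
      rintro S ⟨z, hz⟩ y
      rw [mem_closure_iff_nhds]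
      intro U hU
      obtain ⟨j, ε, hε, hball⟩ := hqball y U hU
      exact ⟨z, hball z (by rw [hdeg] ; exact hε), hz⟩
    -- nonzero vectors in all kernels
    have hker_nonzero : ∀ m : ℕ, ∃ v : X, v ≠ 0 ∧ p m v = 0 := by
      intro m
      by_contra h
      push_neg at h
      exact hnonorm ⟨p m, hpcont m, fun x hx h0 => (h x hx h0).elim⟩
    have key : ∀ m : ℕ, ∃ (v : X) (l : ℕ), p m v = 0 ∧ p l v ≠ 0 := by
      intro m
      obtain ⟨v, hv, h0⟩ := hker_nonzero m
      obtain ⟨l, hl⟩ := hpsep v hv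
      exact ⟨v, l, h0, hl⟩
    choose V L hV hL using key
    set mf : ℕ → ℕ := fun s => Nat.rec 0 (fun _ ms => max ms (L ms) + 1) s with hmf
    have hmf_succ : ∀ s, mf (s + 1) = max (mf s) (L (mf s)) + 1 := fun s => rfl
    set e : ℕ → X := fun s => V (mf s) with he
    set ℓ : ℕ → ℕ := fun s => L (mf s) with hℓ
    have hstep : ∀ s, mf s < mf (s + 1) ∧ ℓ s < mf (s + 1) := by
      intro s
      rw [hmf_succ]
      refine ⟨by omega, ?_⟩
      show L (mf s) < max (mf s) (L (mf s)) + 1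
      omega
    have hmono_mf : ∀ s i, s < i → mf (s + 1) ≤ mf i := by
      intro s i hsi
      induction i with
      | zero => omega
      | succ n ih =>
        rcases Nat.lt_succ_iff_lt_or_eq.1 hsi with h | h
        · exact (ih h).trans (hstep n).1.le
        · subst h
          exact le_rfl
    have hgrade1 : ∀ s, p (ℓ s) (e s) ≠ 0 := fun s => hL (mf s)
    have hgrade2 : ∀ s i, s < i → p (ℓ s) (e i) = 0 := by
      intro s i hsi
      refine hnull_le _ (mf i) _ ?_ (hV (mf i))
      exact ((hstep s).2.le.trans (hmono_mf s i hsi))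
    have hind : LinearIndependent 𝕜 e := graded_linearIndependent p e ℓ hgrade1 hgrade2
    refine ⟨(Submodule.span 𝕜 (Set.range e)).topologicalClosure,
      Submodule.isClosed_topologicalClosure _, ?_, ?_, ?_⟩
    · refine hnotfin _ e hind fun i => ?_
      exact Submodule.le_topologicalClosure _ (Submodule.subset_span ⟨i, rfl⟩)
    · intro x _ hx
      exact hdense _ ⟨T 0 x, ⟨0, rfl⟩⟩
    · intro r hr
      obtain ⟨N, hN⟩ := hker_r r hr
      have hmemk : ∀ i : ℕ, e (i + N) ∈ (Submodule.span 𝕜 (Set.range e)).topologicalClosure ⊓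
          r.kerSubmodule := by
        intro i
        refine Submodule.mem_inf.2 ⟨Submodule.le_topologicalClosure _
          (Submodule.subset_span ⟨i + N, rfl⟩), ?_⟩
        rw [Seminorm.mem_kerSubmodule_iff]
        refine hN _ (hnull_le N (mf (i + N)) _ ?_ (hV _))
        calc N ≤ i + N := by omega
          _ ≤ mf (i + N) := by
              have : StrictMono mf := strictMono_nat_of_lt_succ fun s => (hstep s).1
              exact this.le_apply
      refine hnotfin _ (fun i => e (i + N)) (hind.comp _ fun a b hab => by omega) hmemk
  case pos =>
    obtain ⟨jY, yY, hYne⟩ := hdeg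
    have hYpos : 0 < q jY yY := lt_of_le_of_ne (apply_nonneg _ _) (Ne.symm hYne)
    haveI : Nonempty Y := ⟨0⟩
    obtain ⟨yd, hyd⟩ := TopologicalSpace.exists_dense_seq Y
    obtain ⟨cd, hcd⟩ := TopologicalSpace.exists_dense_seq 𝕜
    -- enumeration of requirements, each value attained at arbitrarily late indices
    set ψ : ℕ → ℕ × ℕ × ℕ × ℕ × ℕ :=
      fun r => (Denumerable.ofNat (ℕ × ℕ × ℕ × ℕ × ℕ × ℕ) r).2 with hψ
    have hhit : ∀ (tup : ℕ × ℕ × ℕ × ℕ × ℕ) (r₀ : ℕ), ∃ r, r₀ ≤ r ∧ ψ r = tup := by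
      intro tup r₀
      have hinj : Function.Injective
          (fun i : ℕ => Encodable.encode ((i, tup) : ℕ × ℕ × ℕ × ℕ × ℕ × ℕ)) := by
        intro a b hab
        have h := Encodable.encode_injective hab
        exact congrArg Prod.fst h
      have hinf := Set.infinite_range_of_injective hinj
      obtain ⟨r, hrmem, hrlt⟩ := hinf.exists_gt r₀
      obtain ⟨i, rfl⟩ := hrmem
      refine ⟨_, hrlt.le, ?_⟩
      show (Denumerable.ofNat (ℕ × ℕ × ℕ × ℕ × ℕ × ℕ) (Encodable.encode (i, tup))).2 = tup
      rw [Denumerable.ofNat_encode]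
    -- stage data
    set sIdx : ℕ → ℕ := fun t => if Even t then t / 2 else (ψ (t / 2)).1 with hsIdx
    set jd : ℕ → ℕ := fun t => if Even t then jY else (ψ (t / 2)).2.2.2.1 with hjd
    set tgt : ℕ → Y :=
      fun t => if Even t then yY else cd ((ψ (t / 2)).2.2.1) • yd ((ψ (t / 2)).2.1) with htgt
    set rad : ℕ → ℝ :=
      fun t => if Even t then q jY yY else 1 / ((ψ (t / 2)).2.2.2.2 + 1) with hrad
    set active : ℕ → Prop := fun t => Even t ∨ 2 * (ψ (t / 2)).1 < t with hactive
    have hradpos : ∀ t, 0 < rad t := by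
      intro t
      rw [hrad]
      dsimp only
      split
      · exact hYpos
      · positivity
    -- the inductive invariant on finite prefixes of the construction
    set Inv : ℕ → (ℕ → X × ℕ × ℕ) → Prop := fun t f => ∀ i, i < t →
      ((f i).1 ∈ X0 ∨ (f i).1 = 0) ∧
      p (f i).2.2 (f i).1 = 0 ∧
      (i + 1 < t → (f i).2.2 < (f (i+1)).2.2 ∧ (f i).2.1 < (f (i+1)).2.1 ∧
        ∃ C : ℝ, 0 ≤ C ∧ ∀ x, q (jd i) (T (nk (f i).2.1) x) ≤ C * p (f (i+1)).2.2 x) ∧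
      (∀ i', i' < i → q (jd i) (T (nk (f i).2.1) (f i').1) = 0) ∧
      (active i → q (jd i) (T (nk (f i).2.1) (f i).1 - tgt i) < rad i ∧ (f i).1 ∈ X0) ∧
      (¬ active i → (f i).1 = 0) ∧
      (∀ s, i = 2*s+1 → ∃ l, p l (f (2*s)).1 ≠ 0 ∧ l < (f i).2.2) with hInv
    -- operator seminorm domination
    have hTsem : ∀ (j k' : ℕ), ∃ N : ℕ, ∃ C : ℝ, 0 ≤ C ∧
        ∀ x : X, q j (T (nk k') x) ≤ C * p N x := by
      intro j k'
      have hc : Continuous ⇑((q j).comp ((T (nk k')) : X →ₗ[𝕜] Y)) := by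
        simp only [Seminorm.coe_comp]
        exact (hqcont j).comp (T (nk k')).continuous
      obtain ⟨N, C, hC, hCb⟩ := hbound _ hc
      exact ⟨N, C, hC, fun x => hCb x⟩
    have hstepex : ∀ (t : ℕ) (f : ℕ → X × ℕ × ℕ), Inv t f →
        ∃ v : X × ℕ × ℕ, Inv (t + 1) (Function.update f t v) := by
      intro t f hf
      obtain ⟨N₁, C₁, hC₁, hC₁b⟩ := hTsem (jd (t - 1)) ((f (t - 1)).2.1)
      have hlev : ∃ lv : ℕ, ∀ s, t = 2*s+1 → p lv ((f (2*s)).1) ≠ 0 := by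
        by_cases ht : ∃ s, t = 2*s+1
        · obtain ⟨s, rfl⟩ := ht
          have h2s : 2*s < 2*s+1 := by omega
          have hact2s : active (2*s) := Or.inl (even_two_mul s)
          obtain ⟨hb, -⟩ := (hf (2*s) h2s).2.2.2.2.1 hact2s
          have hne0 : (f (2*s)).1 ≠ 0 := by
            intro h0
            rw [h0] at hb
            have hjd2s : jd (2*s) = jY := by rw [hjd]; simp [even_two_mul s]
            have htgt2s : tgt (2*s) = yY := by rw [htgt]; simp [even_two_mul s]
            have hrad2s : rad (2*s) = q jY yY := by rw [hrad]; simp [even_two_mul s]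
            rw [hjd2s, htgt2s, hrad2s] at hb
            simp only [map_zero, zero_sub, map_neg_eq_map] at hb
            exact lt_irrefl _ hb
          obtain ⟨l, hl⟩ := hpsep _ hne0
          refine ⟨l, fun s' hs' => ?_⟩
          have : s' = s := by omega
          subst this
          exact hl
        · exact ⟨0, fun s hs => absurd ⟨s, hs⟩ ht⟩
      obtain ⟨lval, hlval⟩ := hlev
      set n : ℕ := max (max ((f (t-1)).2.2) N₁) lval + 1 with hn
      have hnp : ((f (t-1)).2.2) < n := by omega
      have hnN₁ : N₁ ≤ n := by omega
      have hnl : lval < n := by omega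
      have hKex : ∀ t' : ℕ, t' ≤ t →
          ∀ᶠ k' in atTop, ∀ i', i' < t' → q (jd t) (T (nk k') ((f i').1)) = 0 := by
        intro t' ht'
        induction t' with
        | zero => exact Eventually.of_forall fun k' i' hi' => absurd hi' (by omega)
        | succ m ih =>
          have hm : ∀ᶠ k' in atTop, q (jd t) (T (nk k') ((f m).1)) = 0 := by
            rcases (hf m (by omega)).1 with hX | h0
            · exact h1 (jd t) _ hX
            · exact Eventually.of_forall fun k' => by rw [h0]; simp
          filter_upwards [ih (by omega), hm] with k' hA hB i' hi'
          rcases Nat.lt_succ_iff_lt_or_eq.1 hi' with h | h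
          · exact hA i' h
          · subst h; exact hB
      obtain ⟨K₀, hK₀⟩ := eventually_atTop.1 (hKex t le_rfl)
      set K : ℕ := max K₀ ((f (t-1)).2.1 + 1) with hKdef
      have main : ∀ (u : X) (k : ℕ), (u ∈ X0 ∨ u = 0) → p n u = 0 → K ≤ k →
          (active t → q (jd t) (T (nk k) u - tgt t) < rad t ∧ u ∈ X0) →
          (¬ active t → u = 0) →
          Inv (t + 1) (Function.update f t (u, k, n)) := by
        intro u k hu hpu hKk hactb hinactb
        have hupd_lt : ∀ i, i < t → Function.update f t (u, k, n) i = f i :=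
          fun i hi => Function.update_of_ne (by omega) _ _
        have hupd_t : Function.update f t (u, k, n) t = (u, k, n) :=
          Function.update_self _ _ _
        intro i hi
        rcases Nat.lt_succ_iff_lt_or_eq.1 hi with hit | hit
        · obtain ⟨c1, c2, c3, c4, c5, c6, c7⟩ := hf i hit
          rw [hupd_lt i hit]
          refine ⟨c1, c2, ?_, ?_, c5, c6, ?_⟩
          · intro hi1
            rcases Nat.lt_succ_iff_lt_or_eq.1 hi1 with h | h
            · rw [hupd_lt (i+1) h]
              exact c3 h
            · have hieq : i = t - 1 := by omega
              subst hieq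
              rw [h, hupd_t]
              have hK1 : (f (t-1)).2.1 + 1 ≤ K := le_max_right _ _
              refine ⟨hnp, ?_, ⟨C₁, hC₁, fun x => ?_⟩⟩
              · show (f (t-1)).2.1 < k
                omega
              · exact (hC₁b x).trans (mul_le_mul_of_nonneg_left (hpmono N₁ n hnN₁ x) hC₁)
          · intro i' hi'
            rw [hupd_lt i' (by omega)]
            exact c4 i' hi'
          · intro s hs
            rw [hupd_lt (2*s) (by omega)]
            exact c7 s hs
        · subst hit
          rw [hupd_t]
          refine ⟨hu, hpu, fun h => absurd h (lt_irrefl _), ?_, ?_, hinactb, ?_⟩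
          · intro i' hi'
            rw [hupd_lt i' hi']
            exact hK₀ k (le_trans (le_max_left _ _) hKk) i' hi'
          · intro hactt
            exact hactb hactt
          · intro s hs
            rw [hupd_lt (2*s) (by omega)]
            exact ⟨lval, hlval s hs, hnl⟩
      by_cases hact : active t
      · have hOopen : IsOpen {z : Y | q (jd t) (z - tgt t) < rad t} := by
          have hc : Continuous fun z : Y => q (jd t) (z - tgt t) :=
            (hqcont _).comp (continuous_id.sub continuous_const)
          exact isOpen_Iio.preimage hc
        have hOne : {z : Y | q (jd t) (z - tgt t) < rad t}.Nonempty :=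
          ⟨tgt t, by simpa using hradpos t⟩
        obtain ⟨z, hzO, hzD⟩ := (h2 n K).inter_open_nonempty _ hOopen hOne
        simp only [Set.mem_iUnion, Set.mem_image] at hzD
        obtain ⟨k, hkK, u, hu, rfl⟩ := hzD
        obtain ⟨huX0, hukernel⟩ := hu
        exact ⟨(u, k, n), main u k (Or.inl huX0) hukernel hkK
          (fun _ => ⟨hzO, huX0⟩) (fun h => absurd hact h)⟩
      · exact ⟨(0, K, n), main 0 K (Or.inr rfl) (map_zero _) le_rfl
          (fun h => absurd h hact) (fun _ => rfl)⟩
    -- assemble the full construction by recursion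
    set f₀ : ℕ → X × ℕ × ℕ := fun _ => (0, 0, 0) with hf₀
    have hInv0 : Inv 0 f₀ := fun i hi => absurd hi (by omega)
    set vch : ℕ → (ℕ → X × ℕ × ℕ) → X × ℕ × ℕ := fun t ft =>
      if h : ∃ v, Inv (t+1) (Function.update ft t v) then h.choose else (0,0,0) with hvch
    set B : ℕ → ℕ → X × ℕ × ℕ :=
      fun t => Nat.rec f₀ (fun t' ft => Function.update ft t' (vch t' ft)) t with hBdef
    have hBsucc : ∀ t, B (t+1) = Function.update (B t) t (vch t (B t)) := fun t => rfl
    have hInvB : ∀ t, Inv t (B t) := by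
      intro t
      induction t with
      | zero => exact hInv0
      | succ m ih =>
        rw [hBsucc]
        have hex : ∃ v, Inv (m+1) (Function.update (B m) m v) := hstepex m (B m) ih
        have hv : vch m (B m) = hex.choose := dif_pos hex
        rw [hv]
        exact hex.choose_spec
    set g : ℕ → X × ℕ × ℕ := fun i => B (i+1) i with hgdef
    have hagree : ∀ t i, i < t → B t i = g i := by
      intro t
      induction t with
      | zero => omega
      | succ m ih =>
        intro i hi
        rcases Nat.lt_succ_iff_lt_or_eq.1 hi with h | h
        · rw [hBsucc, Function.update_of_ne (by omega)]
          exact ih i h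
        · subst h
          rfl
    -- notation for the constructed data
    set uu : ℕ → X := fun i => (g i).1 with huu
    set kk : ℕ → ℕ := fun i => (g i).2.1 with hkk
    set nn : ℕ → ℕ := fun i => (g i).2.2 with hnn
    -- derived stage facts
    have G1 : ∀ i, (uu i ∈ X0 ∨ uu i = 0) ∧ p (nn i) (uu i) = 0 := by
      intro i
      obtain ⟨c1, c2, -⟩ := hInvB (i+1) i (by omega)
      rw [hagree (i+1) i (by omega)] at c1 c2
      exact ⟨c1, c2⟩
    have G2 : ∀ i, nn i < nn (i+1) ∧ kk i < kk (i+1) := by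
      intro i
      obtain ⟨-, -, c3, -⟩ := hInvB (i+2) i (by omega)
      obtain ⟨d1, d2, -⟩ := c3 (by omega)
      rw [hagree (i+2) i (by omega), hagree (i+2) (i+1) (by omega)] at d1 d2
      exact ⟨d1, d2⟩
    have G3 : ∀ i, ∃ C : ℝ, 0 ≤ C ∧ ∀ x, q (jd i) (T (nk (kk i)) x) ≤ C * p (nn (i+1)) x := by
      intro i
      obtain ⟨-, -, c3, -⟩ := hInvB (i+2) i (by omega)
      obtain ⟨-, -, C, hC, hCb⟩ := c3 (by omega)
      rw [hagree (i+2) i (by omega), hagree (i+2) (i+1) (by omega)] at hCb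
      exact ⟨C, hC, hCb⟩
    have G4 : ∀ i i', i' < i → q (jd i) (T (nk (kk i)) (uu i')) = 0 := by
      intro i i' hi'
      obtain ⟨-, -, -, c4, -⟩ := hInvB (i+1) i (by omega)
      have := c4 i' hi'
      rw [hagree (i+1) i (by omega), hagree (i+1) i' (by omega)] at this
      exact this
    have G5 : ∀ i, active i → q (jd i) (T (nk (kk i)) (uu i) - tgt i) < rad i ∧ uu i ∈ X0 := by
      intro i hact
      obtain ⟨-, -, -, -, c5, -⟩ := hInvB (i+1) i (by omega)
      have := c5 hact
      rw [hagree (i+1) i (by omega)] at this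
      exact this
    have G6 : ∀ i, ¬ active i → uu i = 0 := by
      intro i hact
      obtain ⟨-, -, -, -, -, c6, -⟩ := hInvB (i+1) i (by omega)
      have := c6 hact
      rw [hagree (i+1) i (by omega)] at this
      exact this
    have G7 : ∀ s, ∃ l, p l (uu (2*s)) ≠ 0 ∧ l < nn (2*s+1) := by
      intro s
      obtain ⟨-, -, -, -, -, -, c7⟩ := hInvB (2*s+2) (2*s+1) (by omega)
      obtain ⟨l, hl1, hl2⟩ := c7 s rfl
      rw [hagree (2*s+2) (2*s) (by omega)] at hl1
      rw [hagree (2*s+2) (2*s+1) (by omega)] at hl2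
      exact ⟨l, hl1, hl2⟩
    have hnmono : StrictMono nn := strictMono_nat_of_lt_succ fun i => (G2 i).1
    have hkmono : StrictMono kk := strictMono_nat_of_lt_succ fun i => (G2 i).2
    have hnge : ∀ t, t ≤ nn t := fun t => hnmono.le_apply
    have hunull : ∀ m t, m ≤ nn t → p m (uu t) = 0 := fun m t h =>
      hnull_le m (nn t) _ h (G1 t).2
    set v : ℕ → ℕ → X := fun s t => if sIdx t = s then uu t else 0 with hv
    have hv_cases : ∀ s t, v s t = uu t ∨ v s t = 0 := by
      intro s t
      rw [hv]
      dsimp only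
      split <;> simp
    have hv_early : ∀ s t, t < 2*s → v s t = 0 := by
      intro s t hts
      rw [hv]
      dsimp only
      split
      case isFalse _ => rfl
      case isTrue h =>
        rw [hsIdx] at h
        dsimp only at h
        by_cases he : Even t
        · rw [if_pos he] at h
          obtain ⟨c, hc⟩ := he
          exfalso
          omega
        · rw [if_neg he] at h
          by_cases ha : active t
          · exfalso
            rcases ha with he' | hlt
            · exact he he'
            · rw [h] at hlt
              omega
          · exact G6 t ha
    have hvnull : ∀ s m t, m ≤ nn t → p m (v s t) = 0 := by
      intro s m t h
      rcases hv_cases s t with h' | h' <;> rw [h']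
      · exact hunull m t h
      · exact map_zero _
    have hvnull' : ∀ s m t, m ≤ t → p m (v s t) = 0 := fun s m t h =>
      hvnull s m t (h.trans (hnge t))
    have hE : ∀ s, ∃ x : X, Tendsto (fun N => ∑ t ∈ Finset.range N, v s t) atTop (𝓝 x) ∧
        ∀ m N : ℕ, (∀ t, N ≤ t → p m (v s t) = 0) →
          p m (x - ∑ t ∈ Finset.range N, v s t) = 0 :=
      fun s => exists_tendsto_partialSum p hp hpmono (v s) (fun m t h => hvnull' s m t h)
    choose e hEt hEn using hE
    have hE_ker : ∀ m s, m ≤ nn (2*s) → p m (e s) = 0 := by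
      intro m s hm
      have h0 := hEn s m 0 ?_
      · simpa using h0
      · intro t _
        rcases Nat.lt_or_ge t (2*s) with h | h
        · rw [hv_early s t h]
          exact map_zero _
        · exact hvnull s m t (hm.trans (hnmono.monotone h))
    have hE_idx : ∀ m s, m ≤ s → p m (e s) = 0 := by
      intro m s hm
      exact hE_ker m s (hm.trans ((by omega : s ≤ 2*s).trans (hnge (2*s))))
    choose ℓ hℓ1 hℓ2 using G7
    have hsidx2 : ∀ s, sIdx (2*s) = s := by
      intro s
      rw [hsIdx]
      dsimp only
      rw [if_pos (even_two_mul s)]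
      omega
    have hsum_single : ∀ s, ∑ t ∈ Finset.range (2*s+1), v s t = uu (2*s) := by
      intro s
      have hz : ∀ t ∈ Finset.range (2*s+1), t ≠ 2*s → v s t = 0 := by
        intro t ht hne
        have h' : t < 2*s := by
          have := Finset.mem_range.1 ht
          omega
        exact hv_early s t h'
      rw [Finset.sum_eq_single_of_mem (2*s) (Finset.mem_range.2 (by omega)) hz]
      rw [hv]
      dsimp only
      rw [if_pos (hsidx2 s)]
    have hE_lead : ∀ s, p (ℓ s) (e s) ≠ 0 := by
      intro s
      have hnull : p (ℓ s) (e s - uu (2*s)) = 0 := by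
        have h' := hEn s (ℓ s) (2*s+1) ?_
        · rw [hsum_single s] at h'
          exact h'
        · intro t ht
          exact hvnull s (ℓ s) t ((hℓ2 s).le.trans (hnmono.monotone ht))
      have heq : p (ℓ s) (e s) = p (ℓ s) (uu (2*s)) := by
        have h2 : uu (2*s) + (e s - uu (2*s)) = e s := by abel
        calc p (ℓ s) (e s) = p (ℓ s) (uu (2*s) + (e s - uu (2*s))) := by rw [h2]
          _ = p (ℓ s) (uu (2*s)) := seminorm_add_null _ hnull
      rw [heq]
      exact hℓ1 s
    have hE_later : ∀ s i, s < i → p (ℓ s) (e i) = 0 := by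
      intro s i hsi
      have h' := hEn i (ℓ s) 0 ?_
      · simpa using h'
      · intro t _
        rcases Nat.lt_or_ge t (2*i) with h | h
        · rw [hv_early i t h]
          exact map_zero _
        · refine hvnull i (ℓ s) t ?_
          calc ℓ s ≤ nn (2*s+1) := (hℓ2 s).le
            _ ≤ nn t := hnmono.monotone (by omega)
    have hind : LinearIndependent 𝕜 e := graded_linearIndependent p e ℓ hE_lead hE_later
    set M : Submodule 𝕜 X := (Submodule.span 𝕜 (Set.range e)).topologicalClosure with hM
    have hEM : ∀ s, e s ∈ M := fun s =>
      Submodule.le_topologicalClosure _ (Submodule.subset_span ⟨s, rfl⟩)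
    have hlampos : ∀ s, 0 < p (ℓ s) (e s) := fun s =>
      lt_of_le_of_ne (apply_nonneg _ _) (Ne.symm (hE_lead s))
    -- coefficient bound functionals
    have hBex : ∀ s : ℕ, ∃ B : X → ℝ, Continuous B ∧ B 0 = 0 ∧
        ∀ (b : ℕ → 𝕜) (N : ℕ), s < N → ‖b s‖ ≤ B (∑ i ∈ Finset.range N, b i • e i) := by
      intro s
      induction s using Nat.strong_induction_on with
      | _ s IH =>
      choose Bf hBc hB0 hBb using IH
      refine ⟨fun x => (p (ℓ s) x + ∑ i ∈ (Finset.range s).attach,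
        p (ℓ s) (e i.1) * Bf i.1 (Finset.mem_range.1 i.2) x) / p (ℓ s) (e s), ?_, ?_, ?_⟩
      · refine Continuous.div_const ?_ _
        refine (hpcont (ℓ s)).add ?_
        exact continuous_finset_sum _ fun i _ =>
          continuous_const.mul (hBc i.1 (Finset.mem_range.1 i.2))
      · have hz : ∀ i ∈ (Finset.range s).attach,
            p (ℓ s) (e i.1) * Bf i.1 (Finset.mem_range.1 i.2) (0:X) = 0 := by
          intro i _
          rw [hB0 i.1 (Finset.mem_range.1 i.2), mul_zero]
        show (p (ℓ s) 0 + ∑ i ∈ (Finset.range s).attach,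
            p (ℓ s) (e i.1) * Bf i.1 (Finset.mem_range.1 i.2) (0:X)) / p (ℓ s) (e s) = 0
        rw [map_zero, Finset.sum_eq_zero hz]
        simp
      · intro b N hsN
        set x := ∑ i ∈ Finset.range N, b i • e i with hx
        rw [le_div_iff₀ (hlampos s)]
        have hsplit : x = b s • e s + ∑ i ∈ (Finset.range N).erase s, b i • e i :=
          (Finset.add_sum_erase _ (fun i => b i • e i) (Finset.mem_range.2 hsN)).symm
        have h1 : ‖b s‖ * p (ℓ s) (e s) = p (ℓ s) (b s • e s) :=
          (map_smul_eq_mul _ _ _).symm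
        have h2 : p (ℓ s) (b s • e s) ≤ p (ℓ s) x +
            p (ℓ s) (∑ i ∈ (Finset.range N).erase s, b i • e i) := by
          have hssub : b s • e s = x - ∑ i ∈ (Finset.range N).erase s, b i • e i := by
            rw [hsplit]
            abel
          rw [hssub, sub_eq_add_neg]
          exact (map_add_le_add _ _ _).trans (by rw [map_neg_eq_map])
        have h3 : p (ℓ s) (∑ i ∈ (Finset.range N).erase s, b i • e i) ≤
            ∑ i ∈ (Finset.range s).attach,
              p (ℓ s) (e i.1) * Bf i.1 (Finset.mem_range.1 i.2) x := by
          have hred : ∑ i ∈ Finset.range s, ‖b i‖ * p (ℓ s) (e i) =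
              ∑ i ∈ (Finset.range N).erase s, ‖b i‖ * p (ℓ s) (e i) := by
            refine Finset.sum_subset ?_ ?_
            · intro i hi
              have := Finset.mem_range.1 hi
              exact Finset.mem_erase.2 ⟨by omega, Finset.mem_range.2 (by omega)⟩
            · intro i hi hni
              have h4 := Finset.mem_range.1 (Finset.mem_erase.1 hi).2
              have h5 := (Finset.mem_erase.1 hi).1
              have h6 : s < i := by
                rcases Nat.lt_or_ge i s with h | h
                · exact absurd (Finset.mem_range.2 h) hni
                · omega
              rw [hE_later s i h6, mul_zero]
          calc p (ℓ s) (∑ i ∈ (Finset.range N).erase s, b i • e i)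
              ≤ ∑ i ∈ (Finset.range N).erase s, p (ℓ s) (b i • e i) :=
                seminorm_sum_le _ _ _
            _ = ∑ i ∈ (Finset.range N).erase s, ‖b i‖ * p (ℓ s) (e i) :=
                Finset.sum_congr rfl fun i _ => map_smul_eq_mul _ _ _
            _ = ∑ i ∈ Finset.range s, ‖b i‖ * p (ℓ s) (e i) := hred.symm
            _ = ∑ i ∈ (Finset.range s).attach, ‖b i.1‖ * p (ℓ s) (e i.1) :=
                (Finset.sum_attach _ _).symm
            _ ≤ ∑ i ∈ (Finset.range s).attach,
                p (ℓ s) (e i.1) * Bf i.1 (Finset.mem_range.1 i.2) x := by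
                refine Finset.sum_le_sum fun i _ => ?_
                rw [mul_comm]
                refine mul_le_mul_of_nonneg_left ?_ (apply_nonneg _ _)
                exact hBb i.1 (Finset.mem_range.1 i.2) b N
                  (lt_of_lt_of_le (Finset.mem_range.1 i.2) (by omega))
        calc ‖b s‖ * p (ℓ s) (e s) = p (ℓ s) (b s • e s) := h1
          _ ≤ p (ℓ s) x + p (ℓ s) (∑ i ∈ (Finset.range N).erase s, b i • e i) := h2
          _ ≤ p (ℓ s) x + ∑ i ∈ (Finset.range s).attach,
              p (ℓ s) (e i.1) * Bf i.1 (Finset.mem_range.1 i.2) x := add_le_add_right h3 _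
    choose Bf hBc hB0 hBb using hBex
    haveI : FirstCountableTopology X := hp.firstCountableTopology
    -- every element of M is represented by a convergent series in the e's
    have hrep : ∀ x, x ∈ M → ∃ a : ℕ → 𝕜,
        Tendsto (fun N => ∑ s ∈ Finset.range N, a s • e s) atTop (𝓝 x) := by
      intro x hx
      have hx' : x ∈ closure (Submodule.span 𝕜 (Set.range e) : Set X) := hx
      obtain ⟨y, hy_mem, hy_tend⟩ := mem_closure_iff_seq_limit.1 hx'
      have hyrep : ∀ l : ℕ, ∃ (b : ℕ → 𝕜) (Nb : ℕ),
          y l = ∑ i ∈ Finset.range Nb, b i • e i ∧ ∀ i, Nb ≤ i → b i = 0 := by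
        intro l
        have hmem : y l ∈ Submodule.span 𝕜 (Set.range e) := hy_mem l
        obtain ⟨c, hc⟩ := Finsupp.mem_span_range_iff_exists_finsupp.1 hmem
        refine ⟨c, c.support.sup id + 1, ?_, ?_⟩
        · rw [← hc, Finsupp.sum]
          refine Finset.sum_subset ?_ ?_
          · intro i hi
            have := Finset.le_sup (f := id) hi
            simp only [id_eq] at this
            exact Finset.mem_range.2 (by omega)
          · intro i _ hni
            rw [Finsupp.notMem_support_iff.1 hni, zero_smul]
        · intro i hi
          by_contra hne
          have hmem2 : i ∈ c.support := Finsupp.mem_support_iff.2 hne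
          have := Finset.le_sup (f := id) hmem2
          simp only [id_eq] at this
          omega
      choose b Nb hbrep hbzero using hyrep
      have hext : ∀ (l N' : ℕ), Nb l ≤ N' → y l = ∑ i ∈ Finset.range N', b l i • e i := by
        intro l N' hN'
        rw [hbrep l]
        refine Finset.sum_subset (Finset.range_subset_range.2 hN') ?_
        intro i hi hni
        have h2 : Nb l ≤ i := by
          by_contra h3
          exact hni (Finset.mem_range.2 (by omega))
        rw [hbzero l i h2, zero_smul]
      have hbC : ∀ s, CauchySeq fun l => b l s := by
        intro s
        rw [Metric.cauchySeq_iff]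
        intro ε hε
        have h0 : Tendsto (fun lm : ℕ × ℕ => y lm.1 - y lm.2) (atTop ×ˢ atTop) (𝓝 0) := by
          have hA : Tendsto (fun lm : ℕ × ℕ => y lm.1) (atTop ×ˢ atTop) (𝓝 x) :=
            hy_tend.comp tendsto_fst
          have hB : Tendsto (fun lm : ℕ × ℕ => y lm.2) (atTop ×ˢ atTop) (𝓝 x) :=
            hy_tend.comp tendsto_snd
          simpa using hA.sub hB
        have h3 : Tendsto (fun lm : ℕ × ℕ => Bf s (y lm.1 - y lm.2)) (atTop ×ˢ atTop) (𝓝 0) := by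
          have hc := (hBc s).tendsto 0
          rw [hB0 s] at hc
          exact hc.comp h0
        have h4 : ∀ᶠ lm : ℕ × ℕ in atTop ×ˢ atTop, Bf s (y lm.1 - y lm.2) < ε :=
          h3.eventually (eventually_lt_nhds hε)
        rw [prod_atTop_atTop_eq] at h4
        obtain ⟨NN, hNN⟩ := eventually_atTop.1 h4
        refine ⟨max NN.1 NN.2, fun l hl m hm => ?_⟩
        have hP := hNN (l, m) ⟨le_trans (le_max_left _ _) hl, le_trans (le_max_right _ _) hm⟩
        set N' := max (max (Nb l) (Nb m)) (s+1) with hN'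
        have hdiff : y l - y m = ∑ i ∈ Finset.range N', (b l i - b m i) • e i := by
          rw [hext l N' (by omega), hext m N' (by omega)]
          rw [← Finset.sum_sub_distrib]
          exact Finset.sum_congr rfl fun i _ => (sub_smul _ _ _).symm
        have hbd := hBb s (fun i => b l i - b m i) N' (by omega)
        rw [dist_eq_norm]
        calc ‖b l s - b m s‖ ≤ Bf s (∑ i ∈ Finset.range N', (b l i - b m i) • e i) := hbd
          _ = Bf s (y l - y m) := by rw [← hdiff]
          _ < ε := hP
      have hblim : ∀ s, ∃ as : 𝕜, Tendsto (fun l => b l s) atTop (𝓝 as) := fun s =>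
        cauchySeq_tendsto_of_complete (hbC s)
      choose a ha using hblim
      refine ⟨a, ?_⟩
      have hkey : ∀ m N : ℕ, m ≤ N → p m (x - ∑ s ∈ Finset.range N, a s • e s) = 0 := by
        intro m N hmN
        have hle : ∀ l : ℕ, p m (x - ∑ s ∈ Finset.range N, a s • e s) ≤
            p m (x - y l) + ∑ s ∈ Finset.range N, ‖b l s - a s‖ * p m (e s) := by
          intro l
          set N' := max (Nb l) N with hN'
          have hyl : y l = ∑ i ∈ Finset.range N', b l i • e i := hext l N' (le_max_left _ _)
          have hmid : p m (y l - ∑ s ∈ Finset.range N, b l s • e s) = 0 := by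
            rw [hyl, ← Finset.sum_Ico_eq_sub _ (le_max_right (Nb l) N)]
            refine seminorm_sum_null _ _ _ fun i hi => ?_
            have hiN : N ≤ i := (Finset.mem_Ico.1 hi).1
            rw [map_smul_eq_mul, hE_idx m i (by omega), mul_zero]
          have hdec : x - ∑ s ∈ Finset.range N, a s • e s =
              ((x - y l) + (y l - ∑ s ∈ Finset.range N, b l s • e s)) +
              ∑ s ∈ Finset.range N, (b l s - a s) • e s := by
            have hsub : ∑ s ∈ Finset.range N, (b l s - a s) • e s =
                ∑ s ∈ Finset.range N, b l s • e s - ∑ s ∈ Finset.range N, a s • e s := by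
              rw [← Finset.sum_sub_distrib]
              exact Finset.sum_congr rfl fun i _ => sub_smul _ _ _
            rw [hsub]
            abel
          rw [hdec]
          refine (map_add_le_add _ _ _).trans ?_
          refine add_le_add (le_of_eq ?_) ?_
          · rw [seminorm_add_null _ hmid]
          · refine (seminorm_sum_le _ _ _).trans ?_
            exact le_of_eq (Finset.sum_congr rfl fun i _ => map_smul_eq_mul _ _ _)
        have hlim : Tendsto (fun l => p m (x - y l) +
            ∑ s ∈ Finset.range N, ‖b l s - a s‖ * p m (e s)) atTop (𝓝 0) := by
          have hA : Tendsto (fun l => p m (x - y l)) atTop (𝓝 0) := by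
            have hc : Continuous fun z : X => p m (x - z) :=
              (hpcont m).comp (continuous_const.sub continuous_id)
            have h5 := (hc.tendsto x).comp hy_tend
            simpa [Function.comp_def] using h5
          have hB : Tendsto (fun l => ∑ s ∈ Finset.range N,
              ‖b l s - a s‖ * p m (e s)) atTop (𝓝 0) := by
            have hterm : ∀ s ∈ Finset.range N,
                Tendsto (fun l => ‖b l s - a s‖ * p m (e s)) atTop (𝓝 0) := by
              intro s _
              have h6 : Tendsto (fun l => b l s - a s) atTop (𝓝 0) := by
                have := (ha s).sub (tendsto_const_nhds : Tendsto (fun _ : ℕ => a s) atTop (𝓝 (a s)))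
                simpa using this
              have h7 : Tendsto (fun l => ‖b l s - a s‖) atTop (𝓝 0) := by
                simpa using h6.norm
              simpa using h7.mul_const (p m (e s))
            have h8 := tendsto_finset_sum (Finset.range N) hterm
            simpa using h8
          simpa using hA.add hB
        exact le_antisymm (ge_of_tendsto' hlim hle) (apply_nonneg _ _)
      rw [Filter.HasBasis.tendsto_right_iff hp.hasBasis_ball]
      rintro ⟨F, ε⟩ hε
      filter_upwards [eventually_ge_atTop (F.sup id)] with N hN
      rw [Seminorm.mem_ball]
      have h1 : (F.sup p) ((∑ s ∈ Finset.range N, a s • e s) - x) ≤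
          p (F.sup id) ((∑ s ∈ Finset.range N, a s • e s) - x) :=
        (Finset.sup_le fun i hi => hpmono i (F.sup id) (Finset.le_sup (f := id) hi)) _
      have h2 : p (F.sup id) ((∑ s ∈ Finset.range N, a s • e s) - x) = 0 := by
        rw [← map_neg_eq_map, neg_sub]
        exact hkey (F.sup id) N hN
      calc (F.sup p) ((∑ s ∈ Finset.range N, a s • e s) - x)
          ≤ p (F.sup id) ((∑ s ∈ Finset.range N, a s • e s) - x) := h1
        _ = 0 := h2
        _ < ε := hε
    -- orbit computation at serving stages
    have horbit : ∀ (a : ℕ → 𝕜) (x : X),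
        Tendsto (fun N => ∑ s ∈ Finset.range N, a s • e s) atTop (𝓝 x) →
        ∀ s t : ℕ, ¬ Even t → active t → sIdx t = s →
        q (jd t) (T (nk (kk t)) x - a s • T (nk (kk t)) (uu t)) = 0 := by
      intro a x hax s t hodd hact hsidx
      have hvan : ∀ t', t' ≠ t → q (jd t) (T (nk (kk t)) (uu t')) = 0 := by
        intro t' hne
        rcases Nat.lt_or_ge t' t with h | h
        · exact G4 t t' h
        · have h' : t < t' := by omega
          obtain ⟨C, hC, hCb⟩ := G3 t
          have h0 : p (nn (t+1)) (uu t') = 0 := hunull _ _ (hnmono.monotone h')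
          exact le_antisymm (by simpa [h0] using hCb (uu t')) (apply_nonneg _ _)
      have hvanv : ∀ i t', ¬ (i = s ∧ t' = t) → q (jd t) (T (nk (kk t)) (v i t')) = 0 := by
        intro i t' hne
        rw [hv]
        dsimp only
        split
        case isFalse _ => simp
        case isTrue hidx =>
          rcases eq_or_ne t' t with rfl | hne'
          · refine absurd ⟨?_, rfl⟩ hne
            rw [← hidx, hsidx]
          · exact hvan t' hne'
      have hTcont : Continuous fun z : X => q (jd t) (T (nk (kk t)) z) :=
        (hqcont _).comp (T _).continuous
      have hTe : ∀ i, i ≠ s → q (jd t) (T (nk (kk t)) (e i)) = 0 := by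
        intro i hi
        refine null_of_tendsto hTcont (hEt i) ?_
        refine Eventually.of_forall fun N => ?_
        rw [map_sum]
        exact seminorm_sum_null _ _ _ fun t' _ => hvanv i t' (fun hc => hi hc.1)
      have hTes : q (jd t) (T (nk (kk t)) (e s) - T (nk (kk t)) (uu t)) = 0 := by
        have hc : Continuous fun z : X =>
            q (jd t) (T (nk (kk t)) z - T (nk (kk t)) (uu t)) :=
          (hqcont _).comp ((T _).continuous.sub continuous_const)
        refine null_of_tendsto hc (hEt s) ?_
        filter_upwards [eventually_ge_atTop (t+1)] with N hN
        have hvst : v s t = uu t := by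
          rw [hv]
          dsimp only
          rw [if_pos hsidx]
        have hsum : (∑ t' ∈ Finset.range N, v s t') - uu t =
            ∑ t' ∈ (Finset.range N).erase t, v s t' := by
          rw [← hvst]
          exact (Finset.sum_erase_eq_sub (Finset.mem_range.2 (by omega))).symm
        rw [← map_sub, hsum, map_sum]
        exact seminorm_sum_null _ _ _ fun t' ht' =>
          hvanv s t' (fun hc => (Finset.ne_of_mem_erase ht') hc.2)
      have hSN : ∀ N, s < N → q (jd t) (T (nk (kk t)) (∑ i ∈ Finset.range N, a i • e i) -
          a s • T (nk (kk t)) (uu t)) = 0 := by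
        intro N hsN
        have hdec : T (nk (kk t)) (∑ i ∈ Finset.range N, a i • e i) -
            a s • T (nk (kk t)) (uu t) =
            (∑ i ∈ (Finset.range N).erase s, a i • T (nk (kk t)) (e i)) +
            a s • (T (nk (kk t)) (e s) - T (nk (kk t)) (uu t)) := by
          rw [map_sum]
          simp only [map_smul]
          rw [← Finset.add_sum_erase _ (fun i => a i • T (nk (kk t)) (e i))
            (Finset.mem_range.2 hsN), smul_sub]
          abel
        rw [hdec]
        refine le_antisymm ?_ (apply_nonneg _ _)
        refine (map_add_le_add _ _ _).trans ?_
        have hA : q (jd t) (∑ i ∈ (Finset.range N).erase s, a i • T (nk (kk t)) (e i)) = 0 :=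
          seminorm_sum_null _ _ _ fun i hi => by
            rw [map_smul_eq_mul, hTe i (Finset.ne_of_mem_erase hi), mul_zero]
        have hB : q (jd t) (a s • (T (nk (kk t)) (e s) - T (nk (kk t)) (uu t))) = 0 := by
          rw [map_smul_eq_mul, hTes, mul_zero]
        rw [hA, hB]
        norm_num
      have hc : Continuous fun z : X =>
          q (jd t) (T (nk (kk t)) z - a s • T (nk (kk t)) (uu t)) :=
        (hqcont _).comp ((T _).continuous.sub continuous_const)
      refine null_of_tendsto hc hax ?_
      filter_upwards [eventually_ge_atTop (s+1)] with N hN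
      exact hSN N (by omega)
    -- final assembly
    refine ⟨M, Submodule.isClosed_topologicalClosure _, ?_, ?_, ?_⟩
    · exact hnotfin M e hind hEM
    · intro x hxM hx0
      obtain ⟨a, ha⟩ := hrep x hxM
      have hane : ∃ s, a s ≠ 0 := by
        by_contra hall
        push_neg at hall
        have hzero : (fun N => ∑ s ∈ Finset.range N, a s • e s) = fun _ => (0:X) := by
          funext N
          exact Finset.sum_eq_zero fun i _ => by rw [hall i, zero_smul]
        have h0 : Tendsto (fun N => ∑ s ∈ Finset.range N, a s • e s) atTop (𝓝 (0:X)) := by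
          rw [hzero]
          exact tendsto_const_nhds
        exact hx0 (tendsto_nhds_unique ha h0)
      obtain ⟨s, has⟩ := hane
      intro y
      rw [mem_closure_iff_nhds]
      intro U hU
      obtain ⟨j, ε, hε, hball⟩ := hqball y U hU
      obtain ⟨mI, hmI⟩ : ∃ mI, q j (yd mI - y) < ε/3 := by
        have hop : IsOpen {z : Y | q j (z - y) < ε/3} :=
          isOpen_Iio.preimage ((hqcont j).comp (continuous_id.sub continuous_const))
        have hyy : y ∈ {z : Y | q j (z - y) < ε/3} := by
          simp only [Set.mem_setOf_eq, sub_self, map_zero]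
          positivity
        obtain ⟨mI, hmI⟩ := hyd.exists_mem_open hop ⟨y, hyy⟩
        exact ⟨mI, hmI⟩
      obtain ⟨dI, hdI⟩ : ∃ dI, ‖a s * cd dI - 1‖ * q j (yd mI) < ε/3 := by
        have hcc : Continuous fun c : 𝕜 => ‖a s * c - 1‖ * q j (yd mI) :=
          (((continuous_const.mul continuous_id).sub continuous_const).norm).mul
            continuous_const
        have hop : IsOpen {c : 𝕜 | ‖a s * c - 1‖ * q j (yd mI) < ε/3} :=
          isOpen_Iio.preimage hcc
        have hmem : (a s)⁻¹ ∈ {c : 𝕜 | ‖a s * c - 1‖ * q j (yd mI) < ε/3} := by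
          simp only [Set.mem_setOf_eq, mul_inv_cancel₀ has, sub_self, norm_zero, zero_mul]
          positivity
        obtain ⟨dI, hdI⟩ := hcd.exists_mem_open hop ⟨_, hmem⟩
        exact ⟨dI, hdI⟩
      obtain ⟨ρ, hρ⟩ : ∃ ρ : ℕ, ‖a s‖ * (1/((ρ:ℝ)+1)) < ε/3 := by
        obtain ⟨ρ, hρ0⟩ := exists_nat_gt (‖a s‖ * 3 / ε)
        refine ⟨ρ, ?_⟩
        have h3 : (0:ℝ) < (ρ:ℝ) + 1 := by positivity
        rw [mul_one_div, div_lt_div_iff₀ h3 (by norm_num : (0:ℝ) < 3)]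
        have h4 : ‖a s‖ * 3 < ρ * ε := (div_lt_iff₀ hε).1 hρ0
        nlinarith [hε]
      obtain ⟨r, hrs, hψr⟩ := hhit (s, mI, dI, j, ρ) s
      have hodd : ¬ Even (2*r+1) := by
        rw [Nat.even_iff]
        omega
      have ht2 : (2*r+1) / 2 = r := by omega
      have hψt : ψ ((2*r+1)/2) = (s, mI, dI, j, ρ) := by
        rw [ht2]
        exact hψr
      have hact : active (2*r+1) := by
        rw [hactive]
        refine Or.inr ?_
        rw [hψt]
        dsimp only
        omega
      have hsidxt : sIdx (2*r+1) = s := by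
        rw [hsIdx]
        dsimp only
        rw [if_neg hodd, hψt]
      have hjdt : jd (2*r+1) = j := by
        rw [hjd]
        dsimp only
        rw [if_neg hodd, hψt]
      have htgtt : tgt (2*r+1) = cd dI • yd mI := by
        rw [htgt]
        dsimp only
        rw [if_neg hodd, hψt]
      have hradt : rad (2*r+1) = 1/((ρ:ℝ)+1) := by
        rw [hrad]
        dsimp only
        rw [if_neg hodd, hψt]
      obtain ⟨hb5, -⟩ := G5 (2*r+1) hact
      rw [hjdt, htgtt, hradt] at hb5
      have h01 := horbit a x ha s (2*r+1) hodd hact hsidxt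
      rw [hjdt] at h01
      refine ⟨T (nk (kk (2*r+1))) x, hball _ ?_, ⟨nk (kk (2*r+1)), rfl⟩⟩
      have hq4 : q j (T (nk (kk (2*r+1))) x - y) ≤
          q j (T (nk (kk (2*r+1))) x - a s • T (nk (kk (2*r+1))) (uu (2*r+1))) +
          (q j (a s • T (nk (kk (2*r+1))) (uu (2*r+1)) - a s • (cd dI • yd mI)) +
          (q j ((a s * cd dI) • yd mI - yd mI) + q j (yd mI - y))) := by
        have hsm : a s • (cd dI • yd mI) = (a s * cd dI) • yd mI := (mul_smul _ _ _).symm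
        have hdec : T (nk (kk (2*r+1))) x - y =
            (T (nk (kk (2*r+1))) x - a s • T (nk (kk (2*r+1))) (uu (2*r+1))) +
            ((a s • T (nk (kk (2*r+1))) (uu (2*r+1)) - a s • (cd dI • yd mI)) +
            (((a s * cd dI) • yd mI - yd mI) + (yd mI - y))) := by
          rw [hsm]
          abel
        rw [hdec]
        exact (map_add_le_add _ _ _).trans (add_le_add_right ((map_add_le_add _ _ _).trans
          (add_le_add_right (map_add_le_add _ _ _) _)) _)
      have hB1 : q j (a s • T (nk (kk (2*r+1))) (uu (2*r+1)) - a s • (cd dI • yd mI)) < ε/3 := by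
        rw [← smul_sub, map_smul_eq_mul]
        calc ‖a s‖ * q j (T (nk (kk (2*r+1))) (uu (2*r+1)) - cd dI • yd mI)
            ≤ ‖a s‖ * (1/((ρ:ℝ)+1)) :=
              mul_le_mul_of_nonneg_left hb5.le (norm_nonneg _)
          _ < ε/3 := hρ
      have hB2 : q j ((a s * cd dI) • yd mI - yd mI) < ε/3 := by
        have hss : (a s * cd dI) • yd mI - yd mI = (a s * cd dI - 1) • yd mI := by
          rw [sub_smul, one_smul]
        rw [hss, map_smul_eq_mul]
        exact hdI
      have hfin := hq4
      rw [h01] at hfin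
      have : q j (T (nk (kk (2*r+1))) x - y) < ε := by linarith [hB1, hB2, hmI]
      exact this
    · intro r hr
      obtain ⟨N, hN⟩ := hker_r r hr
      have hmemk : ∀ i : ℕ, e (i + N) ∈ M ⊓ r.kerSubmodule := by
        intro i
        refine Submodule.mem_inf.2 ⟨hEM _, ?_⟩
        rw [Seminorm.mem_kerSubmodule_iff]
        exact hN _ (hE_idx N (i + N) (by omega))
      exact hnotfin _ (fun i => e (i + N)) (hind.comp _ fun a b hab => by omega) hmemk
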